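/- Let E = {(e^{i,t})_{i∈N}, p̄^t}_{t∈T} be a data set and let P = {p^{i,t}}_{(i,t)∈N×T} be any heterogenous prices with a stable distribution with respect to the price indices. Then E is rationalizable with heterogenous preferences if and only if, for each i ∈ N, there is a strictly increasing, continuous utility function u^i: ℝ^K_+ → ℝ such that for each t ∈ T, u^i(x(e^{i,t}, p^{i,t})) ≥ u^i(x) for all x ∈ B(p^{i,t}, m^{i,t}). -/
import Mathlib


open Filter Set MeasureTheory

noncomputable section

/-- The inner product `p·x = ∑ k, p k * x k`. -/
def dotp {K : ℕ} (p x : Fin K → ℝ) : ℝ := ∑ k, p k * x k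

/-- The implied bundle `x(e,p) = (e_k / p_k)_k`. -/
def demandOf {K : ℕ} (e p : Fin K → ℝ) : Fin K → ℝ := fun k => e k / p k

/-- The budget set `B(p,m) = {x ∈ ℝ^K_+ : p·x ≤ m}`. -/
def budget {K : ℕ} (p : Fin K → ℝ) (m : ℝ) : Set (Fin K → ℝ) :=
  {x | (∀ k, 0 ≤ x k) ∧ dotp p x ≤ m}

/-- A utility function on `ℝ^K_+`: continuous and strictly increasing. -/
def IsUtility {K : ℕ} (u : (Fin K → ℝ) → ℝ) : Prop :=
  ContinuousOn u {x | ∀ k, 0 ≤ x k} ∧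
  ∀ x y : Fin K → ℝ, (∀ k, 0 ≤ x k) → (∀ k, 0 ≤ y k) →
    (∀ k, x k ≤ y k) → (∃ k, x k < y k) → u x < u y

/-- Basic data-set conditions: expenditures are nonnegative with positive total,
and price indices are strictly positive. -/
def IsDataset {N T K : ℕ} (e : Fin N → Fin T → Fin K → ℝ)
    (pbar : Fin T → Fin K → ℝ) : Prop :=
  (∀ i t k, 0 ≤ e i t k) ∧ (∀ i t, 0 < ∑ k, e i t k) ∧ (∀ t k, 0 < pbar t k)

/-- Heterogenous prices `p` rationalize the data set: there is a common utility function `u`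
such that each consumer's implied bundle is optimal in the idiosyncratic budget set. -/
def PricesRationalize {N T K : ℕ} (e : Fin N → Fin T → Fin K → ℝ)
    (p : Fin N → Fin T → Fin K → ℝ) : Prop :=
  ∃ u : (Fin K → ℝ) → ℝ, IsUtility u ∧
    ∀ i t, ∀ x ∈ budget (p i t) (∑ k, e i t k), u x ≤ u (demandOf (e i t) (p i t))

/-- The data set is rationalizable with heterogenous preferences. -/
def HetPrefRationalize {N T K : ℕ} (e : Fin N → Fin T → Fin K → ℝ)
    (pbar : Fin T → Fin K → ℝ) : Prop :=
  ∃ u : Fin N → (Fin K → ℝ) → ℝ, (∀ i, IsUtility (u i)) ∧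
    ∀ i t, ∀ x ∈ budget (pbar t) (∑ k, e i t k), u i x ≤ u i (demandOf (e i t) (pbar t))


lemma isUtility_scale {K : ℕ} {u : (Fin K → ℝ) → ℝ} (hu : IsUtility u)
    (c : Fin K → ℝ) (hc : ∀ k, 0 < c k) :
    IsUtility (fun x => u (fun k => c k * x k)) := by
  constructor
  · exact hu.1.comp
      (Continuous.continuousOn (continuous_pi fun k =>
        continuous_const.mul (continuous_apply k)))
      (fun x hx k => mul_nonneg (hc k).le (hx k))
  · intro x y hx hy hxy hlt
    obtain ⟨k0, hk0⟩ := hlt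
    exact hu.2 _ _ (fun k => mul_nonneg (hc k).le (hx k))
      (fun k => mul_nonneg (hc k).le (hy k))
      (fun k => mul_le_mul_of_nonneg_left (hxy k) (hc k).le)
      ⟨k0, mul_lt_mul_of_pos_left hk0 (hc k0)⟩

lemma budget_scale {K : ℕ} (c q : Fin K → ℝ) (hc : ∀ k, 0 < c k) (m : ℝ)
    (x : Fin K → ℝ) :
    x ∈ budget (fun k => c k * q k) m ↔ (fun k => c k * x k) ∈ budget q m := by
  unfold budget dotp
  simp only [Set.mem_setOf_eq]
  constructor
  · rintro ⟨h1, h2⟩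
    refine ⟨fun k => mul_nonneg (hc k).le (h1 k), ?_⟩
    calc ∑ k, q k * (c k * x k) = ∑ k, c k * q k * x k := by
          apply Finset.sum_congr rfl; intro k _; ring
      _ ≤ m := h2
  · rintro ⟨h1, h2⟩
    refine ⟨fun k => by nlinarith [h1 k, hc k], ?_⟩
    calc ∑ k, c k * q k * x k = ∑ k, q k * (c k * x k) := by
          apply Finset.sum_congr rfl; intro k _; ring
      _ ≤ m := h2

lemma demand_scale {K : ℕ} (c q e : Fin K → ℝ) (hc : ∀ k, 0 < c k) :
    (fun k => c k * demandOf e (fun k => c k * q k) k) = demandOf e q := by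
  funext k
  simp only [demandOf]
  rw [div_mul_eq_div_div_swap, mul_div_cancel₀ _ (hc k).ne']

theorem proof_main {N T K : ℕ}
    (e : Fin N → Fin T → Fin K → ℝ) (pbar : Fin T → Fin K → ℝ)
    (hds : IsDataset e pbar)
    (lam : Fin N → Fin K → ℝ) (hlam : ∀ i k, 0 < lam i k)
    (p : Fin N → Fin T → Fin K → ℝ)
    (hp : ∀ i t k, p i t k = lam i k * pbar t k) :
    HetPrefRationalize e pbar ↔
      ∀ i : Fin N, ∃ u : (Fin K → ℝ) → ℝ, IsUtility u ∧
        ∀ t, ∀ x ∈ budget (p i t) (∑ k, e i t k),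
          u x ≤ u (demandOf (e i t) (p i t)) := by
  have hpfun : ∀ i t, p i t = fun k => lam i k * pbar t k := fun i t => funext (hp i t)
  constructor
  · rintro ⟨u, hu, hopt⟩ i
    refine ⟨fun x => u i (fun k => lam i k * x k), isUtility_scale (hu i) _ (hlam i), ?_⟩
    intro t x hx
    rw [hpfun i t] at hx
    have hx' := (budget_scale (lam i) (pbar t) (hlam i) _ x).mp hx
    have := hopt i t _ hx'
    simp only [hpfun i t, demand_scale (lam i) (pbar t) (e i t) (hlam i)]
    exact this
  · intro h
    choose u hu hopt using h
    refine ⟨fun i x => u i (fun k => (lam i k)⁻¹ * x k),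
      fun i => isUtility_scale (hu i) _ (fun k => inv_pos.mpr (hlam i k)), ?_⟩
    intro i t x hx
    have hinv : ∀ y : Fin K → ℝ, (fun k => lam i k * ((lam i k)⁻¹ * y k)) = y := by
      intro y; funext k
      rw [← mul_assoc, mul_inv_cancel₀ (hlam i k).ne', one_mul]
    have hx' : (fun k => (lam i k)⁻¹ * x k) ∈ budget (p i t) (∑ k, e i t k) := by
      rw [hpfun i t, budget_scale (lam i) (pbar t) (hlam i), hinv]
      exact hx
    have := hopt i t _ hx'
    have hd : (fun k => (lam i k)⁻¹ * demandOf (e i t) (pbar t) k)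
        = demandOf (e i t) (p i t) := by
      funext k
      simp only [demandOf, hp i t k]
      rw [div_mul_eq_div_div_swap, inv_mul_eq_div]
    simp only [hd]
    exact this

/-- Proposition 3: for any stable price distribution
`p^{i,t}_k = λ_{i,k} p̄^t_k`, the data set is rationalizable with heterogenous
preferences iff each consumer's data, evaluated at her idiosyncratic prices,
is rationalizable. -/
theorem stable_prices_indistinguishable {N T K : ℕ}
    (e : Fin N → Fin T → Fin K → ℝ) (pbar : Fin T → Fin K → ℝ)
    (hds : IsDataset e pbar)
    (lam : Fin N → Fin K → ℝ) (hlam : ∀ i k, 0 < lam i k)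
    (p : Fin N → Fin T → Fin K → ℝ)
    (hp : ∀ i t k, p i t k = lam i k * pbar t k) :
    HetPrefRationalize e pbar ↔
      ∀ i : Fin N, ∃ u : (Fin K → ℝ) → ℝ, IsUtility u ∧
        ∀ t, ∀ x ∈ budget (p i t) (∑ k, e i t k),
          u x ≤ u (demandOf (e i t) (p i t)) := by
  exact proof_main e pbar hds lam hlam p hp
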